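/- Let E ∈ ℝ² with E ≠ 0, let R, X ∈ ℝ with R ≠ 0 and X ≠ 0, let Imax > 0, and let M₁ ≠ M₂ be two distinct matrices from {M_P, M_Q, M_V}. For every W ∈ 𝒲 there exists W' ∈ 𝒲 with rank(W') ≤ 1 such that Tr(M₁ W') = Tr(M₁ W), Tr(M₂ W') = Tr(M₂ W), and Tr(W') ≤ Tr(W). -/

import Mathlib

/-- The matrix `J` with rows `(0,1)` and `(-1,0)`. -/
def Jmat : Matrix (Fin 2) (Fin 2) ℝ := !![0, 1; -1, 0]

/-- The impedance matrix `Z` with rows `(R,-X)` and `(X,R)`. -/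
def Zmat (R X : ℝ) : Matrix (Fin 2) (Fin 2) ℝ := !![R, -X; X, R]

/-- Interpret a plain vector `Fin 2 → ℝ` as an element of Euclidean space `ℝ²`. -/
noncomputable def toE (v : Fin 2 → ℝ) : EuclideanSpace ℝ (Fin 2) := WithLp.toLp 2 v

/-- The vector `J E ∈ ℝ²`. -/
noncomputable def Jv (E : EuclideanSpace ℝ (Fin 2)) : EuclideanSpace ℝ (Fin 2) :=
  toE (Jmat.mulVec (fun i => E i))

/-- The vector `Zᵀ E ∈ ℝ²`. -/
noncomputable def ZtE (R X : ℝ) (E : EuclideanSpace ℝ (Fin 2)) : EuclideanSpace ℝ (Fin 2) :=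
  toE ((Zmat R X).transpose.mulVec (fun i => E i))

/-- `M(α, a, ζ)`: the 3×3 symmetric matrix with top-left 2×2 block `α·I₂`,
top-right column `a/2`, bottom-left row `aᵀ/2`, and bottom-right entry `ζ`. -/
noncomputable def Mmat (α : ℝ) (a : EuclideanSpace ℝ (Fin 2)) (ζ : ℝ) :
    Matrix (Fin 3) (Fin 3) ℝ :=
  !![α, 0, a 0 / 2; 0, α, a 1 / 2; a 0 / 2, a 1 / 2, ζ]

/-- `M_P := M(3R/2, (3/2)E, 0)`. -/
noncomputable def MP (E : EuclideanSpace ℝ (Fin 2)) (R : ℝ) : Matrix (Fin 3) (Fin 3) ℝ :=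
  Mmat (3 * R / 2) ((3 / 2 : ℝ) • E) 0

/-- `M_Q := M(3X/2, (3/2)JE, 0)`. -/
noncomputable def MQ (E : EuclideanSpace ℝ (Fin 2)) (X : ℝ) : Matrix (Fin 3) (Fin 3) ℝ :=
  Mmat (3 * X / 2) ((3 / 2 : ℝ) • Jv E) 0

/-- `M_V := M(R² + X², 2ZᵀE, ‖E‖²)`. -/
noncomputable def MV (E : EuclideanSpace ℝ (Fin 2)) (R X : ℝ) : Matrix (Fin 3) (Fin 3) ℝ :=
  Mmat (R ^ 2 + X ^ 2) ((2 : ℝ) • ZtE R X E) (‖E‖ ^ 2)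

/-- The SDP feasible set `𝒲`. -/
def Wset (Imax : ℝ) : Set (Matrix (Fin 3) (Fin 3) ℝ) :=
  {W | W.PosSemidef ∧ W 0 0 + W 1 1 ≤ Imax ^ 2 ∧ W 2 2 = 1}

lemma trace_Mmat (α ζ : ℝ) (a : EuclideanSpace ℝ (Fin 2)) (A : Matrix (Fin 3) (Fin 3) ℝ) :
    (Mmat α a ζ * A).trace = α * (A 0 0 + A 1 1) + (a 0 / 2) * (A 2 0 + A 0 2)
      + (a 1 / 2) * (A 2 1 + A 1 2) + ζ * A 2 2 := by
  simp [Mmat, Matrix.trace, Matrix.diag, Matrix.mul_apply, Fin.sum_univ_three]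
  ring

set_option maxHeartbeats 1000000 in
lemma key (α₁ α₂ ζ₁ ζ₂ : ℝ) (a₁ a₂ : EuclideanSpace ℝ (Fin 2))
    (hd : a₁ 0 * a₂ 1 - a₁ 1 * a₂ 0 ≠ 0)
    (Imax : ℝ) (W : Matrix (Fin 3) (Fin 3) ℝ) (hW : W ∈ Wset Imax) :
    ∃ W' ∈ Wset Imax, W'.rank ≤ 1 ∧
      (Mmat α₁ a₁ ζ₁ * W').trace = (Mmat α₁ a₁ ζ₁ * W).trace ∧
      (Mmat α₂ a₂ ζ₂ * W').trace = (Mmat α₂ a₂ ζ₂ * W).trace ∧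
      W'.trace ≤ W.trace := by
  obtain ⟨hpsd, hIm, h22⟩ := hW
  have hsym : ∀ i j, W j i = W i j := fun i j => by
    have := hpsd.1.apply i j
    simpa using this
  have h00 : 0 ≤ W 0 0 := by
    have := hpsd.dotProduct_mulVec_nonneg ![1, 0, 0]
    simpa [Matrix.mulVec, dotProduct, Fin.sum_univ_three] using this
  have h11 : 0 ≤ W 1 1 := by
    have := hpsd.dotProduct_mulVec_nonneg ![0, 1, 0]
    simpa [Matrix.mulVec, dotProduct, Fin.sum_univ_three] using this
  have h02 : W 0 2 * W 0 2 ≤ W 0 0 := by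
    have hq : ∀ x : ℝ, 0 ≤ W 0 0 * (x * x) + (2 * W 0 2) * x + 1 := by
      intro x
      have h := hpsd.dotProduct_mulVec_nonneg ![x, 0, 1]
      simp [Matrix.mulVec, dotProduct, Fin.sum_univ_three, h22] at h
      rw [hsym 0 2] at h
      ring_nf at h ⊢
      linarith [h]
    have hd2 := discrim_le_zero hq
    rw [discrim] at hd2
    nlinarith [hd2]
  have h12 : W 1 2 * W 1 2 ≤ W 1 1 := by
    have hq : ∀ x : ℝ, 0 ≤ W 1 1 * (x * x) + (2 * W 1 2) * x + 1 := by
      intro x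
      have h := hpsd.dotProduct_mulVec_nonneg ![0, x, 1]
      simp [Matrix.mulVec, dotProduct, Fin.sum_univ_three, h22] at h
      rw [hsym 1 2] at h
      ring_nf at h ⊢
      linarith [h]
    have hd2 := discrim_le_zero hq
    rw [discrim] at hd2
    nlinarith [hd2]
  set t := W 0 0 + W 1 1 with ht
  set c0 := (α₁ * a₂ 1 - α₂ * a₁ 1) / (a₁ 0 * a₂ 1 - a₁ 1 * a₂ 0) with hc0
  set c1 := (a₁ 0 * α₂ - a₂ 0 * α₁) / (a₁ 0 * a₂ 1 - a₁ 1 * a₂ 0) with hc1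
  have hca : a₁ 0 * c0 + a₁ 1 * c1 = α₁ := by
    rw [hc0, hc1]; field_simp; ring
  have hcb : a₂ 0 * c0 + a₂ 1 * c1 = α₂ := by
    rw [hc0, hc1, mul_div_assoc', mul_div_assoc', ← add_div, div_eq_iff hd]; ring
  set f : ℝ → ℝ := fun s =>
    (W 0 2 + (t - s) * c0) ^ 2 + (W 1 2 + (t - s) * c1) ^ 2 - s with hf
  have ht0 : 0 ≤ t := by positivity
  have hft : f t ≤ 0 := by
    have : f t = W 0 2 ^ 2 + W 1 2 ^ 2 - t := by simp [hf]
    rw [this]; nlinarith [h02, h12]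
  have hf0 : 0 ≤ f 0 := by
    have : f 0 = (W 0 2 + t * c0) ^ 2 + (W 1 2 + t * c1) ^ 2 := by simp [hf]
    rw [this]; positivity
  have hcont : ContinuousOn f (Set.Icc 0 t) := by
    apply Continuous.continuousOn; fun_prop
  obtain ⟨s, hsmem, hfs⟩ := intermediate_value_Icc' ht0 hcont ⟨hft, hf0⟩
  have hps : (W 0 2 + (t - s) * c0) ^ 2 + (W 1 2 + (t - s) * c1) ^ 2 = s := by
    have h : f s = 0 := hfs
    simp only [hf] at h
    linarith [h]
  set v : Fin 3 → ℝ := ![W 0 2 + (t - s) * c0, W 1 2 + (t - s) * c1, 1] with hv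
  have hv0 : v 0 = W 0 2 + (t - s) * c0 := rfl
  have hv1 : v 1 = W 1 2 + (t - s) * c1 := rfl
  have hv2 : v 2 = 1 := rfl
  have hent : ∀ i j, Matrix.vecMulVec v v i j = v i * v j := fun i j => rfl
  refine ⟨Matrix.vecMulVec v v, ⟨Matrix.PosSemidef.of_dotProduct_mulVec_nonneg ?_ ?_, ?_, ?_⟩, ?_, ?_, ?_, ?_⟩
  · ext i j
    simp [Matrix.vecMulVec, Matrix.conjTranspose_apply, mul_comm]
  · intro x
    have hx : dotProduct (star x) (Matrix.mulVec (Matrix.vecMulVec v v) x) = (dotProduct v x) ^ 2 := by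
      simp [Matrix.vecMulVec, Matrix.mulVec, dotProduct, Fin.sum_univ_three]
      ring
    rw [hx]; positivity
  · rw [hent 0 0, hent 1 1, hv0, hv1]
    have hsum : (W 0 2 + (t - s) * c0) * (W 0 2 + (t - s) * c0)
        + (W 1 2 + (t - s) * c1) * (W 1 2 + (t - s) * c1) = s := by
      linear_combination hps
    rw [hsum]
    linarith [hsmem.2, hIm]
  · rw [hent 2 2, hv2]; ring
  · rw [Matrix.vecMulVec_eq (Fin 1)]
    exact le_trans (Matrix.rank_mul_le_right _ _)
      (le_trans (Matrix.rank_le_card_height _) (by simp))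
  · rw [trace_Mmat, trace_Mmat, hent 0 0, hent 1 1, hent 2 0, hent 0 2, hent 2 1,
      hent 1 2, hent 2 2, hv0, hv1, hv2, hsym 0 2, hsym 1 2, h22]
    linear_combination α₁ * hps + (t - s) * hca
  · rw [trace_Mmat, trace_Mmat, hent 0 0, hent 1 1, hent 2 0, hent 0 2, hent 2 1,
      hent 1 2, hent 2 2, hv0, hv1, hv2, hsym 0 2, hsym 1 2, h22]
    linear_combination α₂ * hps + (t - s) * hcb
  · have h1 : (Matrix.vecMulVec v v).trace = s + 1 := by
      simp only [Matrix.trace, Matrix.diag, Fin.sum_univ_three, hent, hv0, hv1, hv2]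
      linear_combination hps
    have h2 : W.trace = t + 1 := by
      simp [Matrix.trace, Matrix.diag, Fin.sum_univ_three, h22, ht]
    rw [h1, h2]
    linarith [hsmem.2]

/-- rank-1 adjustment: any feasible SDP matrix `W ∈ 𝒲` can be replaced
by a rank-at-most-1 feasible matrix `W'` with the same output values `Tr(M₁W), Tr(M₂W)`
and no larger trace. -/
theorem stmt13 (E : EuclideanSpace ℝ (Fin 2)) (hE : E ≠ 0) (R X : ℝ)
    (hR : R ≠ 0) (hX : X ≠ 0) (Imax : ℝ) (hI : 0 < Imax)
    (M₁ M₂ : Matrix (Fin 3) (Fin 3) ℝ)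
    (hM₁ : M₁ ∈ ({MP E R, MQ E X, MV E R X} : Set (Matrix (Fin 3) (Fin 3) ℝ)))
    (hM₂ : M₂ ∈ ({MP E R, MQ E X, MV E R X} : Set (Matrix (Fin 3) (Fin 3) ℝ)))
    (hMne : M₁ ≠ M₂)
    (W : Matrix (Fin 3) (Fin 3) ℝ) (hW : W ∈ Wset Imax) :
    ∃ W' ∈ Wset Imax, W'.rank ≤ 1 ∧
      (M₁ * W').trace = (M₁ * W).trace ∧
      (M₂ * W').trace = (M₂ * W).trace ∧
      W'.trace ≤ W.trace := by
  have hE2 : E 0 ^ 2 + E 1 ^ 2 ≠ 0 := by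
    intro h
    apply hE
    have h0 : E 0 = 0 := by nlinarith [sq_nonneg (E 0), sq_nonneg (E 1)]
    have h1 : E 1 = 0 := by nlinarith [sq_nonneg (E 0), sq_nonneg (E 1)]
    ext i
    fin_cases i <;> simp [h0, h1]
  have ja0 : Jv E 0 = E 1 := by
    simp [Jv, toE, Jmat, Matrix.mulVec, dotProduct, Fin.sum_univ_two]
  have ja1 : Jv E 1 = -E 0 := by
    simp [Jv, toE, Jmat, Matrix.mulVec, dotProduct, Fin.sum_univ_two]
  have za0 : ZtE R X E 0 = R * E 0 + X * E 1 := by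
    simp [ZtE, toE, Zmat, Matrix.mulVec, dotProduct, Matrix.transpose,
      Fin.sum_univ_two]
  have za1 : ZtE R X E 1 = -X * E 0 + R * E 1 := by
    simp [ZtE, toE, Zmat, Matrix.mulVec, dotProduct, Matrix.transpose,
      Fin.sum_univ_two]
  have sm : ∀ (r : ℝ) (w : EuclideanSpace ℝ (Fin 2)) (i : Fin 2), (r • w) i = r * w i :=
    fun _ _ _ => rfl
  simp only [Set.mem_insert_iff, Set.mem_singleton_iff] at hM₁ hM₂
  rcases hM₁ with rfl | rfl | rfl <;> rcases hM₂ with rfl | rfl | rfl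
  · exact absurd rfl hMne
  · refine key _ _ _ _ _ _ ?_ Imax W hW
    simp only [sm, ja0, ja1]
    intro h; exact hE2 (by linear_combination (-(4:ℝ)/9) * h)
  · refine key _ _ _ _ _ _ ?_ Imax W hW
    simp only [sm, za0, za1]
    intro h
    have h' : X * (E 0 ^ 2 + E 1 ^ 2) = 0 := by linear_combination (-(1:ℝ)/3) * h
    rcases mul_eq_zero.mp h' with h'' | h''
    · exact hX h''
    · exact hE2 h''
  · refine key _ _ _ _ _ _ ?_ Imax W hW
    simp only [sm, ja0, ja1]
    intro h; exact hE2 (by linear_combination ((4:ℝ)/9) * h)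
  · exact absurd rfl hMne
  · refine key _ _ _ _ _ _ ?_ Imax W hW
    simp only [sm, ja0, ja1, za0, za1]
    intro h
    have h' : R * (E 0 ^ 2 + E 1 ^ 2) = 0 := by linear_combination ((1:ℝ)/3) * h
    rcases mul_eq_zero.mp h' with h'' | h''
    · exact hR h''
    · exact hE2 h''
  · refine key _ _ _ _ _ _ ?_ Imax W hW
    simp only [sm, za0, za1]
    intro h
    have h' : X * (E 0 ^ 2 + E 1 ^ 2) = 0 := by linear_combination ((1:ℝ)/3) * h
    rcases mul_eq_zero.mp h' with h'' | h''
    · exact hX h''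
    · exact hE2 h''
  · refine key _ _ _ _ _ _ ?_ Imax W hW
    simp only [sm, ja0, ja1, za0, za1]
    intro h
    have h' : R * (E 0 ^ 2 + E 1 ^ 2) = 0 := by linear_combination (-(1:ℝ)/3) * h
    rcases mul_eq_zero.mp h' with h'' | h''
    · exact hR h''
    · exact hE2 h''
  · exact absurd rfl hMne
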